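/- One has Σ_{k∈ℕ} ∬_{{(s,t) : s ∈ E_k, t ∈ [0,1]∖N_k}} ds dt / |s−t|² ≤ ∬_{{(s,t) ∈ [0,1]×[0,1] : |g(s)−g(t)| > δ}} ds dt / |s−t|². -/
import Mathlib


open MeasureTheory Set

/-- One-dimensional Lebesgue measure of a set, as a real number. -/
noncomputable def len (A : Set ℝ) : ℝ := (volume A).toReal

/-- The discretized level set `E_k = {s ∈ [0,1] | kδ ≤ g(s) ≤ (k+1)δ}`. -/
def lev (g : ℝ → ℝ) (δ : ℝ) (k : ℤ) : Set ℝ :=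
  {s ∈ Icc (0:ℝ) 1 | (k : ℝ) * δ ≤ g s ∧ g s ≤ ((k : ℝ) + 1) * δ}

/-- The neighbors `N_k = E_{k-1} ∪ E_k ∪ E_{k+1}`. -/
def nbr (g : ℝ → ℝ) (δ : ℝ) (k : ℤ) : Set ℝ :=
  lev g δ (k - 1) ∪ lev g δ k ∪ lev g δ (k + 1)

/-- The set of satisfied indices `𝒮`. -/
def sat (g : ℝ → ℝ) (δ : ℝ) : Set ℕ :=
  {k | ∃ a b : ℝ, 0 ≤ a ∧ a < b ∧ b ≤ 1 ∧
    len (lev g δ k ∩ Ioo a b) > 0.01 * (b - a) ∧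
    len ((Icc (0:ℝ) 1 \ nbr g δ k) ∩ Ioo a b) > 0.01 * (b - a)}

/-- Inequality (5): `∑_{k ∈ ℕ} ∬_{s ∈ E_k, t ∉ N_k} ds dt / |s-t|²
≤ ∬_{s,t ∈ [0,1], |g(s)-g(t)| > δ} ds dt / |s-t|²`. -/
theorem stmt11 (δ : ℝ) (hδ : 0 < δ) (M : ℕ) (hM : 100 < M) (g : ℝ → ℝ)
    (hg : ContinuousOn g (Icc (0:ℝ) 1)) (hg0 : g 0 = 0) (hg1 : g 1 = (M : ℝ) * δ)
    (hlev : ∀ k : ℕ, {s ∈ Icc (0:ℝ) 1 | g s = (k : ℝ) * δ}.Finite) :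
    ∑' k : ℕ, ∫⁻ p in (lev g δ k) ×ˢ (Icc (0:ℝ) 1 \ nbr g δ k),
        ENNReal.ofReal (1 / |p.1 - p.2| ^ 2) ≤
      ∫⁻ p in {p : ℝ × ℝ | p.1 ∈ Icc (0:ℝ) 1 ∧ p.2 ∈ Icc (0:ℝ) 1 ∧ δ < |g p.1 - g p.2|},
        ENNReal.ofReal (1 / |p.1 - p.2| ^ 2) := by
  classical
  set f : ℝ × ℝ → ENNReal := fun p => ENNReal.ofReal (1 / |p.1 - p.2| ^ 2) with hf
  set T : ℕ → Set ℝ := fun k => Icc (0:ℝ) 1 \ nbr g δ k with hT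
  set Z : ℕ → Set ℝ := fun k => {s ∈ Icc (0:ℝ) 1 | g s = ((k+1 : ℕ) : ℝ) * δ} with hZ
  have hZfin : ∀ k, (Z k).Finite := fun k => hlev (k+1)
  set B : ℕ → Set ℝ := fun k => lev g δ k \ Z k with hB
  -- closedness of level sets
  have hclosed : ∀ k : ℤ, IsClosed (lev g δ k) := by
    intro k
    have he : lev g δ k = Icc (0:ℝ) 1 ∩ g ⁻¹' Icc ((k:ℝ) * δ) (((k:ℝ) + 1) * δ) := by
      ext s
      simp only [lev, Set.mem_setOf_eq, Set.mem_inter_iff, Set.mem_preimage, Set.mem_Icc]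
    rw [he]
    exact hg.preimage_isClosed_of_isClosed isClosed_Icc isClosed_Icc
  have hTmeas : ∀ k : ℕ, MeasurableSet (T k) := by
    intro k
    exact measurableSet_Icc.diff
      (((hclosed _).union (hclosed _)).union (hclosed _)).measurableSet
  have hBmeas : ∀ k : ℕ, MeasurableSet (B k) :=
    fun k => (hclosed k).measurableSet.diff (hZfin k).measurableSet
  -- step 1: replace lev by B in each integral (difference is null)
  have hstep1 : ∀ k : ℕ,
      ∫⁻ p in (lev g δ k) ×ˢ (T k), f p = ∫⁻ p in (B k) ×ˢ (T k), f p := by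
    intro k
    apply setLIntegral_congr
    rw [Filter.eventuallyEq_set]
    have hnull : volume ((Z k) ×ˢ (Set.univ : Set ℝ)) = 0 := by
      rw [Measure.volume_eq_prod, Measure.prod_prod, (hZfin k).measure_zero, zero_mul]
    have hsub : (lev g δ k) ×ˢ (T k) \ (B k) ×ˢ (T k) ⊆ (Z k) ×ˢ (Set.univ : Set ℝ) := by
      rintro ⟨s, t⟩ ⟨⟨hs, ht⟩, hnot⟩
      simp only [Set.mem_prod, Set.mem_univ, and_true]
      by_contra hsZ
      exact hnot ⟨⟨hs, hsZ⟩, ht⟩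
    have h0 := measure_mono_null hsub hnull
    filter_upwards [measure_eq_zero_iff_ae_notMem.mp h0] with p hp
    constructor
    · intro hpm
      by_contra hpb
      exact hp ⟨hpm, hpb⟩
    · rintro ⟨hpb, hpt⟩
      exact ⟨hpb.1, hpt⟩
  -- step 2: the sets B k ×ˢ T k are pairwise disjoint
  have hdisj : Pairwise (Function.onFun Disjoint fun k : ℕ => (B k) ×ˢ (T k)) := by
    have key : ∀ j k : ℕ, j < k → Disjoint ((B j) ×ˢ (T j)) ((B k) ×ˢ (T k)) := by
      intro j k hjk
      rw [Set.disjoint_left]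
      rintro ⟨s, t⟩ ⟨⟨hsj, hsjZ⟩, -⟩ ⟨⟨hsk, -⟩, -⟩
      have h1 : g s ≤ ((j:ℝ) + 1) * δ := hsj.2.2
      have h2 : (k:ℝ) * δ ≤ g s := hsk.2.1
      have h3 : g s ≠ ((j:ℝ) + 1) * δ := by
        intro he
        apply hsjZ
        refine ⟨hsj.1, ?_⟩
        push_cast
        linarith
      have h4 : ((j:ℝ) + 1) ≤ (k:ℝ) := by exact_mod_cast hjk
      have h5 : g s < ((j:ℝ) + 1) * δ := lt_of_le_of_ne h1 h3
      nlinarith [mul_le_mul_of_nonneg_right h4 hδ.le]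
    intro j k hjk
    rcases lt_or_gt_of_ne hjk with h | h
    · exact key j k h
    · exact (key k j h).symm
  -- step 3: union is contained in the target set
  have hsub : (⋃ k : ℕ, (B k) ×ˢ (T k)) ⊆
      {p : ℝ × ℝ | p.1 ∈ Icc (0:ℝ) 1 ∧ p.2 ∈ Icc (0:ℝ) 1 ∧ δ < |g p.1 - g p.2|} := by
    rintro ⟨s, t⟩ hp
    simp only [Set.mem_iUnion] at hp
    obtain ⟨k, ⟨hsB, -⟩, htT⟩ := hp
    obtain ⟨hsI, hgs1, hgs2⟩ := hsB
    obtain ⟨htI, htN⟩ := htT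
    refine ⟨hsI, htI, ?_⟩
    push_cast at hgs1 hgs2
    have hcast1 : (((k:ℤ) - 1 : ℤ) : ℝ) = (k:ℝ) - 1 := by push_cast; ring
    have hcast2 : (((k:ℤ) + 1 : ℤ) : ℝ) = (k:ℝ) + 1 := by push_cast; ring
    have hgt : g t < ((k:ℝ) - 1) * δ ∨ ((k:ℝ) + 2) * δ < g t := by
      by_contra hcon
      push_neg at hcon
      obtain ⟨hge, hle⟩ := hcon
      apply htN
      rcases le_or_gt (g t) ((k:ℝ) * δ) with h | h
      · exact Or.inl (Or.inl ⟨htI, by rw [hcast1]; constructor <;> linarith⟩)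
      · rcases le_or_gt (g t) (((k:ℝ) + 1) * δ) with h' | h'
        · exact Or.inl (Or.inr ⟨htI, by push_cast; constructor <;> linarith⟩)
        · exact Or.inr ⟨htI, by rw [hcast2]; constructor <;> linarith⟩
    rcases hgt with h | h
    · rw [abs_sub_comm, abs_of_neg (by nlinarith)]
      nlinarith
    · rw [abs_sub_comm, abs_of_pos (by nlinarith)]
      nlinarith
  -- combine
  calc ∑' k : ℕ, ∫⁻ p in (lev g δ k) ×ˢ (Icc (0:ℝ) 1 \ nbr g δ k), f p
      = ∑' k : ℕ, ∫⁻ p in (B k) ×ˢ (T k), f p := tsum_congr hstep1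
    _ = ∫⁻ p in ⋃ k : ℕ, (B k) ×ˢ (T k), f p := by
        rw [lintegral_iUnion (fun k => (hBmeas k).prod (hTmeas k)) hdisj]
    _ ≤ _ := lintegral_mono' (Measure.restrict_mono hsub le_rfl) le_rfl
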